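/- Let R be a commutative ring of prime characteristic p, a ∈ R, and n, r natural numbers. Then D_{n·p^r}(x, a) = (D_n(x, a))^(p^r); that is, dickson 1 a (n·p^r) = (dickson 1 a n)^(p^r). -/

import Mathlib

open Polynomial

section Aux

variable {R : Type*} [CommRing R]

theorem dickson_eval_add_of_mul_eq' (a x y : R) (h : x * y = a) :
    ∀ n, (dickson 1 a n).eval (x + y) = x ^ n + y ^ n
  | 0 => by
    simp only [dickson_zero, Nat.cast_one, eval_sub, eval_ofNat, eval_one, pow_zero]
    norm_num
  | 1 => by simp
  | n + 2 => by
    subst h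
    simp only [dickson_add_two, eval_sub, eval_mul, eval_X, eval_C,
      dickson_eval_add_of_mul_eq' _ x y rfl (n + 1), dickson_eval_add_of_mul_eq' _ x y rfl n]
    ring

/-- The addition formula `D_{m+2k} + a^k D_m = D_{m+k} * D_k`. -/
theorem dickson_add_formula (a : R) :
    ∀ k m, dickson 1 a (m + 2 * k) + C a ^ k * dickson 1 a m
      = dickson 1 a (m + k) * dickson 1 a k
  | 0, m => by
    simp only [Nat.mul_zero, Nat.add_zero, pow_zero, one_mul, dickson_zero, Nat.cast_one]
    norm_num
    ring
  | 1, m => by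
    have h : m + 2 * 1 = m + 2 := by ring
    rw [h, pow_one, dickson_one, dickson_add_two]
    ring
  | k + 2, m => by
    have IH1 := dickson_add_formula a (k + 1) (m + 1)
    have IH2 := dickson_add_formula a k (m + 2)
    have r1 := dickson_add_two 1 a (m + 2 * k + 2)
    have r2 := dickson_add_two 1 a m
    have r3 := dickson_add_two 1 a k
    have e1 : m + 2 * (k + 2) = m + 2 * k + 2 + 2 := by ring
    have e2 : m + 1 + 2 * (k + 1) = m + 2 * k + 2 + 1 := by ring
    have e3 : m + 1 + (k + 1) = m + (k + 2) := by ring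
    have e4 : m + 2 + 2 * k = m + 2 * k + 2 := by ring
    have e5 : m + 2 + k = m + (k + 2) := by ring
    rw [e2, e3] at IH1
    rw [e4, e5] at IH2
    rw [e1]
    linear_combination r1 + X * IH1 - C a * IH2
      - dickson 1 a (m + (k + 2)) * r3 + C a ^ (k + 1) * r2

/-- In characteristic `p`, the `p`-th Dickson polynomial of the first kind is `X ^ p`,
for any parameter `a`. -/
theorem dickson_p_charP' (R : Type*) [CommRing R] (p : ℕ) [Fact p.Prime] [CharP R p] (a : R) :
    dickson 1 a p = X ^ p := by
  -- it suffices to prove it in the universal case `(ZMod p)[X]`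
  suffices h : dickson 1 (X : (ZMod p)[X]) p = X ^ p by
    have := congrArg (Polynomial.map (eval₂RingHom (ZMod.castHom (dvd_refl p) R) a)) h
    rwa [map_dickson, Polynomial.map_pow, map_X, coe_eval₂RingHom, eval₂_X] at this
  -- embed `(ZMod p)[X]` into its fraction field `K`
  set A := Polynomial (ZMod p) with hA
  let K := FractionRing A
  have hinj : Function.Injective (algebraMap A K) := IsFractionRing.injective _ _
  have : CharP K p := charP_of_injective_algebraMap hinj p
  haveI : Infinite K := Infinite.of_injective (algebraMap A K) hinj
  set b : K := algebraMap A K X with hb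
  have hb0 : b ≠ 0 := fun hzero => X_ne_zero (hinj (by rw [map_zero]; exact hzero))
  apply map_injective (algebraMap A K) hinj
  rw [map_dickson, Polynomial.map_pow, map_X, ← hb]
  apply eq_of_infinite_eval_eq
  apply @Set.Infinite.mono _ { x : K | ∃ y, x = y + b * y⁻¹ ∧ y ≠ 0 }
  · rintro _ ⟨y, rfl, hy⟩
    have hmul : y * (b * y⁻¹) = b := by rw [mul_comm b, mul_inv_cancel_left₀ hy]
    simp only [Set.mem_setOf_eq, eval_pow, eval_X,
      dickson_eval_add_of_mul_eq' b y (b * y⁻¹) hmul p, add_pow_char]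
  · intro h
    have hcov : (Set.univ : Set K) ⊆
        ⋃ x ∈ { x : K | ∃ y, x = y + b * y⁻¹ ∧ y ≠ 0 }, { y | x = y + b * y⁻¹ ∨ y = 0 } := by
      intro y _
      simp only [Set.mem_iUnion, Set.mem_setOf_eq, exists_prop]
      by_cases hy : y = 0
      · exact ⟨1 + b * 1⁻¹, ⟨1, rfl, one_ne_zero⟩, Or.inr hy⟩
      · exact ⟨y + b * y⁻¹, ⟨y, rfl, hy⟩, Or.inl rfl⟩
    classical
    have hfin : (Set.univ : Set K).Finite := by
      refine Set.Finite.subset (Set.Finite.biUnion h fun x _ => ?_) hcov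
      have hφ : (X ^ 2 - C x * X + C b : K[X]) ≠ 0 := by
        intro H
        apply hb0
        have := congrArg (eval 0) H
        simpa using this
      apply Set.Finite.subset
        (((X ^ 2 - C x * X + C b : K[X]).roots.toFinset.finite_toSet).union
          (Set.finite_singleton 0))
      rintro y (hy | rfl)
      · by_cases hy0 : y = 0
        · exact Or.inr hy0
        · left
          simp only [Multiset.mem_toFinset, Finset.mem_coe, mem_roots hφ, IsRoot, eval_add,
            eval_sub, eval_pow, eval_mul, eval_X, eval_C]
          rw [hy]
          linear_combination (-b) * inv_mul_cancel₀ hy0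
      · exact Or.inr rfl
    exact Set.infinite_univ hfin

theorem dickson_mul_p (R : Type*) [CommRing R] (p : ℕ) [Fact p.Prime] [CharP R p] (a : R) :
    ∀ n, dickson 1 a (n * p) = expand R p (dickson 1 (a ^ p) n)
  | 0 => by simp [dickson_zero, map_ofNat]
  | 1 => by rw [one_mul, dickson_p_charP' R p a, dickson_one, expand_X]
  | n + 2 => by
    have IH1 := dickson_mul_p R p a (n + 1)
    have IH0 := dickson_mul_p R p a n
    have key := dickson_add_formula a p (n * p)
    have e1 : (n + 2) * p = n * p + 2 * p := by ring
    have e2 : (n + 1) * p = n * p + p := by ring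
    rw [e2] at IH1
    rw [e1, dickson_add_two, map_sub, map_mul, map_mul, expand_X, expand_C,
      dickson_p_charP' R p a] at *
    rw [← IH1, ← IH0, ← C_pow] at *
    linear_combination key

theorem dickson_mul_p' (R : Type*) [CommRing R] (p : ℕ) [Fact p.Prime] [CharP R p] (a : R)
    (n : ℕ) : dickson 1 a (n * p) = (dickson 1 a n) ^ p := by
  have h1 : dickson 1 (a ^ p) n = Polynomial.map (frobenius R p) (dickson 1 a n) := by
    rw [map_dickson]
    simp [frobenius_def]
  rw [dickson_mul_p R p a n, h1, ← map_expand, map_frobenius_expand]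

end Aux

/-- In characteristic `p`, `D_{n·p^r}(x, a) = (D_n(x, a))^(p^r)`. -/
theorem dickson_first_pow_char
    (R : Type*) [CommRing R] (p : ℕ) [hp : Fact p.Prime] [CharP R p]
    (a : R) (n r : ℕ) :
    dickson 1 a (n * p ^ r) = (dickson 1 a n) ^ (p ^ r) := by
  induction r with
  | zero => simp
  | succ r ih =>
    have e : n * p ^ (r + 1) = n * p ^ r * p := by ring
    rw [e, dickson_mul_p' R p a (n * p ^ r), ih, ← pow_mul, pow_succ]
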